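/- Let μ be a Λ-bounded premeasure on 𝕋. Then its Poisson integral P[μ](z) = ∫_𝕋 (1−|z|²)/|e^{iθ}−z|² dμ(θ) satisfies P[μ](z) ≤ 10‖μ‖⁺_Λ · Λ(1−|z|) for all z ∈ 𝔻. -/

import Mathlib

open MeasureTheory Filter Metric Set
open scoped Topology ENNReal

noncomputable section

instance : Fact ((0:ℝ) < 1) := ⟨one_pos⟩

/-- The circle of circumference 1. -/
abbrev Circle1 := AddCircle (1 : ℝ)

/-- Arcs (possibly half-open, possibly empty) of the circle. -/
def IsArc (S : Set Circle1) : Prop :=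
  ∃ a l : ℝ, 0 ≤ l ∧ l ≤ 1 ∧ S = (fun x : ℝ => (x : Circle1)) '' Set.Ico a (a + l)

/-- Normalized length of a subset of the circle. -/
def arcLen (S : Set Circle1) : ℝ := (volume S).toReal

/-- A premeasure on the circle: finitely additive on arcs, total mass zero,
continuous on nested sequences of arcs with empty intersection. -/
structure Premeasure where
  m : Set Circle1 → ℝ
  empty : m ∅ = 0
  total : m Set.univ = 0
  union : ∀ S T : Set Circle1, Disjoint S T → IsArc T → m (S ∪ T) = m S + m T
  cont : ∀ I : ℕ → Set Circle1, (∀ n, IsArc (I n)) → (∀ n, I (n + 1) ⊆ I n) →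
    (⋂ n, I n) = ∅ → Tendsto (fun n => m (I n)) atTop (𝓝 0)

/-- `μ(I) ≤ C |I| Λ(|I|)` for every arc `I`. -/
def LambdaBounded (Λ : ℝ → ℝ) (μ : Premeasure) (C : ℝ) : Prop :=
  ∀ S : Set Circle1, IsArc S → μ.m S ≤ C * arcLen S * Λ (arcLen S)

/-- Majorant hypotheses on `Λ`. -/
def Majorant (Λ : ℝ → ℝ) : Prop :=
  (∀ t ∈ Set.Ioc (0:ℝ) 1, 0 < Λ t) ∧ AntitoneOn Λ (Set.Ioc 0 1) ∧
  MonotoneOn (fun t => t * Λ t) (Set.Ioc 0 1) ∧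
  Tendsto (fun t => t * Λ t) (𝓝[>] 0) (𝓝 0) ∧
  Tendsto Λ (𝓝[>] 0) atTop

/-- The arc starting at angle `a` of length `l` (angles normalized to `[0,1)`). -/
def stdArc (a l : ℝ) : Set Circle1 := (fun x : ℝ => (x : Circle1)) '' Set.Ico a (a + l)


namespace Stmt7

lemma circ_coe_add_one (x : ℝ) : ((x + 1 : ℝ) : Circle1) = (x : Circle1) := by
  rw [AddCircle.coe_add, show ((1 : ℝ) : Circle1) = 0 from AddCircle.coe_period 1, add_zero]

lemma stdArc_isArc {a l : ℝ} (h0 : 0 ≤ l) (h1 : l ≤ 1) : IsArc (stdArc a l) :=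
  ⟨a, l, h0, h1, rfl⟩

lemma stdArc_zero (a : ℝ) : stdArc a 0 = ∅ := by
  unfold stdArc
  rw [add_zero, Set.Ico_self, Set.image_empty]

lemma stdArc_one (a : ℝ) : stdArc a 1 = Set.univ := AddCircle.coe_image_Ico_eq (p := 1) a

lemma stdArc_add_one (a l : ℝ) : stdArc (a + 1) l = stdArc a l := by
  unfold stdArc
  ext y
  constructor
  · rintro ⟨x, hx, rfl⟩
    exact ⟨x - 1, ⟨by linarith [hx.1], by linarith [hx.2]⟩,
      by simpa using circ_coe_add_one (x - 1)⟩
  · rintro ⟨x, hx, rfl⟩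
    exact ⟨x + 1, ⟨by linarith [hx.1], by linarith [hx.2]⟩, circ_coe_add_one x⟩

lemma stdArc_split (a l m : ℝ) (hl : 0 ≤ l) (hm : 0 ≤ m) :
    stdArc a (l + m) = stdArc a l ∪ stdArc (a + l) m := by
  unfold stdArc
  rw [← Set.image_union]
  congr 1
  rw [Set.Ico_union_Ico_eq_Ico (by linarith) (by linarith)]
  ring_nf

lemma stdArc_disjoint {a l m : ℝ} (hl : 0 ≤ l) (hm : 0 ≤ m) (hsum : l + m ≤ 1) :
    Disjoint (stdArc a l) (stdArc (a + l) m) := by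
  rw [Set.disjoint_left]
  rintro y ⟨x, hx, rfl⟩ ⟨x', hx', hxx⟩
  have hx1 : x ∈ Set.Ico a (a + 1) := ⟨hx.1, lt_of_lt_of_le hx.2 (by linarith)⟩
  have hx1' : x' ∈ Set.Ico a (a + 1) := ⟨by linarith [hx'.1], lt_of_lt_of_le hx'.2 (by linarith)⟩
  rw [AddCircle.coe_eq_coe_iff_of_mem_Ico hx1' hx1] at hxx
  subst hxx
  exact absurd hx'.1 (not_le.2 hx.2)

end Stmt7

namespace Stmt7

lemma equivIco_coe {a x : ℝ} (hx : x ∈ Set.Ico a (a + 1)) :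
    ((AddCircle.equivIco 1 a) (x : Circle1) : ℝ) = x := by
  have h : (AddCircle.equivIco 1 a) (x : Circle1) = ⟨x, hx⟩ := by
    rw [Equiv.apply_eq_iff_eq_symm_apply]; rfl
  rw [h]

lemma coe_equivIco_symm (a : ℝ) (y : Circle1) :
    (((AddCircle.equivIco 1 a) y : ℝ) : Circle1) = y :=
  (AddCircle.equivIco 1 a).symm_apply_apply y

lemma mem_stdArc_iff {a l : ℝ} (h1 : l ≤ 1) {y : Circle1} :
    y ∈ stdArc a l ↔ ((AddCircle.equivIco 1 a) y : ℝ) < a + l := by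
  constructor
  · rintro ⟨x, hx, rfl⟩
    have hx1 : x ∈ Set.Ico a (a + 1) := ⟨hx.1, lt_of_lt_of_le hx.2 (by linarith)⟩
    rw [equivIco_coe hx1]; exact hx.2
  · intro h
    exact ⟨((AddCircle.equivIco 1 a) y : ℝ), ⟨((AddCircle.equivIco 1 a) y).2.1, h⟩,
      coe_equivIco_symm a y⟩

lemma stdArc_measurable {a l : ℝ} (h1 : l ≤ 1) : MeasurableSet (stdArc a l) := by
  have h : stdArc a l =
      (fun y : Circle1 => ((AddCircle.measurableEquivIco 1 a) y : ℝ)) ⁻¹' Set.Iio (a + l) := by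
    ext y
    exact mem_stdArc_iff h1
  rw [h]
  exact (measurable_subtype_coe.comp (AddCircle.measurableEquivIco 1 a).measurable)
    measurableSet_Iio

lemma volume_stdArc {a l : ℝ} (h0 : 0 ≤ l) (h1 : l ≤ 1) :
    volume (stdArc a l) = ENNReal.ofReal l := by
  have hmeas := stdArc_measurable (a := a) h1
  have hmp := AddCircle.measurePreserving_mk (T := 1) (a + l - 1)
  have key : volume (stdArc a l) =
      volume (((fun x : ℝ => (x : Circle1)) ⁻¹' stdArc a l) ∩ Set.Ioc (a + l - 1) (a + l)) := by
    rw [← hmp.measure_preimage hmeas.nullMeasurableSet,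
      Measure.restrict_apply (AddCircle.measurable_mk' hmeas)]
    norm_num
  rw [key]
  apply le_antisymm
  · have hsub : ((fun x : ℝ => (x : Circle1)) ⁻¹' stdArc a l) ∩ Set.Ioc (a + l - 1) (a + l) ⊆
        Set.Icc a (a + l) := by
      rintro x ⟨hmem, hx⟩
      obtain ⟨x', hx', hxx⟩ := hmem
      have hsub : x' - x ∈ AddSubgroup.zmultiples (1 : ℝ) := by
        rw [← QuotientAddGroup.eq_iff_sub_mem]
        exact hxx
      obtain ⟨k, hk⟩ := AddSubgroup.mem_zmultiples_iff.mp hsub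
      have hk' : (k : ℝ) = x' - x := by simpa using hk
      have hkb : (-1 : ℤ) < -k ∧ (-k : ℤ) ≤ 1 := by
        constructor
        · exact_mod_cast show (-1 : ℝ) < -k by
            push_cast; rw [hk']; cases hx; cases hx'; linarith
        · exact_mod_cast show ((-k : ℤ) : ℝ) ≤ 1 by
            push_cast; rw [hk']; cases hx; cases hx'; linarith
      have : k = 0 ∨ k = -1 := by omega
      rcases this with rfl | rfl
      · have hx0 : x = x' := by
          have := hk'
          push_cast at this
          linarith
        subst hx0
        exact ⟨hx'.1, le_of_lt hx'.2⟩
      · have hxeq : x = x' + 1 := by push_cast at hk'; linarith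
        cases hx; cases hx'
        constructor <;> linarith
    calc volume _ ≤ volume (Set.Icc a (a + l)) := measure_mono hsub
      _ = ENNReal.ofReal l := by rw [Real.volume_Icc]; norm_num
  · have hsub : Set.Ioo a (a + l) ⊆
        ((fun x : ℝ => (x : Circle1)) ⁻¹' stdArc a l) ∩ Set.Ioc (a + l - 1) (a + l) := by
      rintro x ⟨hx1, hx2⟩
      refine ⟨⟨x, ⟨le_of_lt hx1, hx2⟩, rfl⟩, ⟨by linarith, le_of_lt hx2⟩⟩
    calc ENNReal.ofReal l = volume (Set.Ioo a (a + l)) := by rw [Real.volume_Ioo]; norm_num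
      _ ≤ _ := measure_mono hsub

lemma arcLen_stdArc {a l : ℝ} (h0 : 0 ≤ l) (h1 : l ≤ 1) : arcLen (stdArc a l) = l := by
  rw [arcLen, volume_stdArc h0 h1, ENNReal.toReal_ofReal h0]

end Stmt7

namespace Stmt7

lemma circ_coe_add_int (x : ℝ) (k : ℤ) : ((x + k : ℝ) : Circle1) = (x : Circle1) := by
  rw [AddCircle.coe_add]
  have h : (((k : ℝ)) : Circle1) = 0 :=
    (QuotientAddGroup.eq_zero_iff _).2 (AddSubgroup.mem_zmultiples_iff.2 ⟨k, by simp⟩)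
  rw [h, add_zero]

lemma stdArc_add_int (a l : ℝ) (k : ℤ) : stdArc (a + k) l = stdArc a l := by
  unfold stdArc
  ext y
  constructor
  · rintro ⟨x, hx, rfl⟩
    exact ⟨x - k, ⟨by linarith [hx.1], by linarith [hx.2]⟩,
      by simpa using circ_coe_add_int (x - k) k⟩
  · rintro ⟨x, hx, rfl⟩
    exact ⟨x + k, ⟨by linarith [hx.1], by linarith [hx.2]⟩, circ_coe_add_int x k⟩

variable (μ : Premeasure)

lemma mu_zero (a : ℝ) : μ.m (stdArc a 0) = 0 := by rw [stdArc_zero]; exact μ.empty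

lemma mu_one (a : ℝ) : μ.m (stdArc a 1) = 0 := by rw [stdArc_one]; exact μ.total

lemma mu_split {l m : ℝ} (a : ℝ) (hl : 0 ≤ l) (hm : 0 ≤ m) (hsum : l + m ≤ 1) :
    μ.m (stdArc a (l + m)) = μ.m (stdArc a l) + μ.m (stdArc (a + l) m) := by
  rw [stdArc_split a l m hl hm]
  exact μ.union _ _ (stdArc_disjoint hl hm hsum) (stdArc_isArc hm (by linarith))

/-- distribution function -/
def nu (t : ℝ) : ℝ := μ.m (stdArc 0 t)

/-- periodized distribution function -/
def NN (t : ℝ) : ℝ := μ.m (stdArc 0 (Int.fract t))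

lemma NN_periodic : Function.Periodic (NN μ) 1 := fun t => by
  unfold NN; rw [Int.fract_periodic ℝ t]

lemma NN_add_int (t : ℝ) (k : ℤ) : NN μ (t + k) = NN μ t := by
  unfold NN; rw [Int.fract_add_intCast]

lemma NN_eq {t : ℝ} (h0 : 0 ≤ t) (h1 : t ≤ 1) : NN μ t = nu μ t := by
  rcases lt_or_eq_of_le h1 with h | h
  · unfold NN nu; rw [Int.fract_eq_self.2 ⟨h0, h⟩]
  · subst h
    unfold NN nu
    rw [Int.fract_one, mu_zero, mu_one]

lemma mu_arc_eq {l : ℝ} (a : ℝ) (h0 : 0 ≤ l) (h1 : l ≤ 1) :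
    μ.m (stdArc a l) = NN μ (a + l) - NN μ a := by
  set b := Int.fract a with hbdef
  have hb0 : 0 ≤ b := Int.fract_nonneg a
  have hb1 : b < 1 := Int.fract_lt_one a
  have hab : a = b + (⌊a⌋ : ℤ) := by rw [hbdef]; push_cast [Int.fract]; ring
  have harc : stdArc a l = stdArc b l := by rw [hab, stdArc_add_int]
  have hfr : a + l = (b + l) + ((⌊a⌋ : ℤ) : ℝ) := by rw [hbdef, Int.fract]; push_cast; ring
  have hN1 : NN μ (a + l) = NN μ (b + l) := by
    conv_lhs => rw [hfr]
    rw [NN_add_int]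
  have hfr2 : a = b + ((⌊a⌋ : ℤ) : ℝ) := by rw [hbdef, Int.fract]; push_cast; ring
  have hN2 : NN μ a = NN μ b := by
    conv_lhs => rw [hfr2]
    rw [NN_add_int]
  rw [harc, hN1, hN2]
  rcases le_or_gt (b + l) 1 with hbl | hbl
  · have h2 := mu_split μ 0 hb0 h0 (by linarith)
    rw [zero_add] at h2
    rw [NN_eq μ (by linarith) hbl, NN_eq μ hb0 (le_of_lt hb1)]
    unfold nu
    linarith
  · have hc0 : 0 ≤ b + l - 1 := by linarith
    have h2 : μ.m (stdArc b l) = μ.m (stdArc b (1 - b)) + μ.m (stdArc 0 (b + l - 1)) := by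
      have h3 := mu_split μ (l := 1 - b) (m := b + l - 1) b (by linarith) hc0 (by linarith)
      rw [show (1 : ℝ) - b + (b + l - 1) = l by ring] at h3
      rw [show b + (1 - b) = 0 + 1 by ring, stdArc_add_one] at h3
      exact h3
    have h4 : μ.m (stdArc b (1 - b)) = - μ.m (stdArc 0 b) := by
      have h5 := mu_split μ (l := b) (m := 1 - b) 0 hb0 (by linarith) (by linarith)
      rw [show b + (1 - b) = (1 : ℝ) by ring, zero_add, mu_one] at h5
      linarith
    have h6 : b + l = (b + l - 1) + ((1 : ℤ) : ℝ) := by push_cast; ring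
    have hN3 : NN μ (b + l) = nu μ (b + l - 1) := by
      conv_lhs => rw [h6]
      rw [NN_add_int, NN_eq μ hc0 (by linarith)]
    rw [hN3, NN_eq μ hb0 (le_of_lt hb1)]
    unfold nu
    linarith

end Stmt7

namespace Stmt7

variable {Λ : ℝ → ℝ} {C : ℝ} (μ : Premeasure)

lemma mu_arc_le (hμ : LambdaBounded Λ μ C) {l : ℝ} (a : ℝ) (h0 : 0 ≤ l) (h1 : l ≤ 1) :
    μ.m (stdArc a l) ≤ C * (l * Λ l) := by
  have h := hμ _ (stdArc_isArc (a := a) h0 h1)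
  rw [arcLen_stdArc h0 h1] at h
  linarith [h]

lemma nu_nonpos {t : ℝ} (ht : t ≤ 0) : nu μ t = 0 := by
  unfold nu stdArc
  rw [Set.Ico_eq_empty (by linarith), Set.image_empty]
  exact μ.empty

lemma nu_ge_one {t : ℝ} (ht : 1 ≤ t) : nu μ t = 0 := by
  have h : stdArc 0 t = Set.univ := by
    apply Set.eq_univ_of_univ_subset
    rw [← stdArc_one 0]
    exact Set.image_mono (Set.Ico_subset_Ico le_rfl (by linarith))
  unfold nu
  rw [h]
  exact μ.total

lemma stdArc_iInter_empty (t : ℝ) :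
    (⋂ n : ℕ, stdArc (t - (1/2)^(n+1)) ((1/2)^(n+1))) = ∅ := by
  ext y
  simp only [Set.mem_iInter, Set.mem_empty_iff_false, iff_false]
  intro h
  obtain ⟨x, hx0, hxy⟩ := h 0
  rw [show ((1:ℝ)/2)^(0+1) = 1/2 by norm_num] at hx0
  -- x ∈ [t - 1/2, t)
  have hwin : x ∈ Set.Ico (t - 1/2) (t - 1/2 + 1) := ⟨hx0.1, by linarith [hx0.2]⟩
  have hxlt : ∀ n : ℕ, t - (1/2)^(n+1) ≤ x := by
    intro n
    obtain ⟨x', hx', hxy'⟩ := h n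
    have hd1 : (1/2 : ℝ)^(n+1) ≤ 1/2 := by
      calc (1/2 : ℝ)^(n+1) ≤ (1/2)^(0+1) := by
            apply pow_le_pow_of_le_one (by norm_num) (by norm_num) (by omega)
      _ = 1/2 := by norm_num
    have hd0 : (0 : ℝ) < (1/2)^(n+1) := by positivity
    have hwin' : x' ∈ Set.Ico (t - 1/2) (t - 1/2 + 1) :=
      ⟨by linarith [hx'.1], by linarith [hx'.2]⟩
    have : x' = x := by
      rw [← AddCircle.coe_eq_coe_iff_of_mem_Ico hwin' hwin]
      exact hxy'.trans hxy.symm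
    subst this
    linarith [hx'.1]
  have hpos : 0 < t - x := by linarith [hx0.2]
  obtain ⟨n, hn⟩ := exists_pow_lt_of_lt_one hpos (by norm_num : (1/2 : ℝ) < 1)
  have := hxlt n
  have hle : (1/2 : ℝ)^(n+1) ≤ (1/2)^n :=
    pow_le_pow_of_le_one (by norm_num) (by norm_num) (by omega)
  linarith

/-- Quantitative left-continuity of `nu`. -/
lemma nu_left_cont (hΛ : Majorant Λ) (hC : 0 ≤ C) (hμ : LambdaBounded Λ μ C)
    (t : ℝ) {ε : ℝ} (hε : 0 < ε) :
    ∃ δ > 0, ∀ s, t - δ ≤ s → s ≤ t → |nu μ s - nu μ t| ≤ ε := by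
  rcases le_or_gt t 0 with ht | ht
  · exact ⟨1, one_pos, fun s hs1 hs2 => by
      rw [nu_nonpos μ (le_trans hs2 ht), nu_nonpos μ ht]
      simpa using le_of_lt hε⟩
  rcases lt_or_ge 1 t with ht1 | ht1
  · refine ⟨t - 1, by linarith, fun s hs1 hs2 => ?_⟩
    rw [nu_ge_one μ (by linarith), nu_ge_one μ (by linarith)]
    simpa using le_of_lt hε
  -- main case : 0 < t ≤ 1
  -- small g bound
  have hg := hΛ.2.2.2.1
  have hε4 : 0 < ε / (2 * (C + 1)) := by positivity
  obtain ⟨δ₁, hδ₁, hgδ⟩ := Metric.tendsto_nhdsWithin_nhds.mp hg _ hε4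
  have hgood : ∀ h : ℝ, 0 ≤ h → h < δ₁ → C * (h * Λ h) ≤ ε / 2 := by
    intro h h0 h1
    rcases eq_or_lt_of_le h0 with rfl | h0'
    · simp; positivity
    · have := hgδ (Set.mem_Ioi.2 h0') (by simpa [Real.dist_eq, abs_of_pos h0'] using h1)
      rw [Real.dist_eq, sub_zero] at this
      have h2 : C * (h * Λ h) ≤ C * |h * Λ h| := by
        apply mul_le_mul_of_nonneg_left (le_abs_self _) hC
      have h3 : C * |h * Λ h| ≤ C * (ε / (2 * (C + 1))) := by
        apply mul_le_mul_of_nonneg_left (le_of_lt this) hC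
      have h4 : C * (ε / (2 * (C + 1))) ≤ ε / 2 := by
        have hd : (0:ℝ) < 2 * (C + 1) := by positivity
        have he : ε / (2 * (C + 1)) * (2 * (C + 1)) = ε := div_mul_cancel₀ _ (ne_of_gt hd)
        have hq : 0 ≤ ε / (2 * (C + 1)) := le_of_lt hε4
        nlinarith
      linarith
  -- continuity of the premeasure on the shrinking arcs
  have hcont := μ.cont (fun n => stdArc (t - (1/2)^(n+1)) ((1/2)^(n+1)))
    (fun n => stdArc_isArc (by positivity) (pow_le_one₀ (by norm_num) (by norm_num)))
    (fun n => by
      have h1 : (1/2 : ℝ)^(n+1+1) ≤ (1/2)^(n+1) :=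
        pow_le_pow_of_le_one (by norm_num) (by norm_num) (by omega)
      unfold stdArc
      apply Set.image_mono
      rintro x ⟨hxa, hxb⟩
      exact ⟨by linarith, by linarith⟩)
    (stdArc_iInter_empty t)
  rw [Metric.tendsto_atTop] at hcont
  obtain ⟨n₁, hn₁⟩ := hcont (ε/2) (by positivity)
  -- choose n with (1/2)^(n+1) small enough
  obtain ⟨n₂, hn₂⟩ := exists_pow_lt_of_lt_one (lt_min (lt_min ht hδ₁) one_pos)
    (by norm_num : (1/2 : ℝ) < 1)
  set n := max n₁ n₂ with hndef
  set δ : ℝ := (1/2)^(n+1) with hδdef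
  have hδpos : 0 < δ := by positivity
  have hδsmall : δ < min (min t δ₁) 1 := by
    calc δ ≤ (1/2)^n₂ := by
          apply pow_le_pow_of_le_one (by norm_num) (by norm_num)
          omega
    _ < _ := hn₂
  have hδt : δ < t := lt_of_lt_of_le hδsmall (le_trans (min_le_left _ _) (min_le_left _ _))
  have hδ1' : δ < δ₁ := lt_of_lt_of_le hδsmall (le_trans (min_le_left _ _) (min_le_right _ _))
  have hδle1 : δ ≤ 1 := le_of_lt (lt_of_lt_of_le hδsmall (min_le_right _ _))
  have hIn : |μ.m (stdArc (t - δ) δ)| ≤ ε / 2 := by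
    have := hn₁ n (le_max_left _ _)
    rw [Real.dist_eq, sub_zero] at this
    exact le_of_lt this
  have harc_le : ∀ a h : ℝ, 0 ≤ h → h ≤ δ → μ.m (stdArc a h) ≤ ε / 2 := by
    intro a h h0 h1
    exact le_trans (mu_arc_le μ hμ a h0 (le_trans h1 hδle1))
      (hgood h h0 (lt_of_le_of_lt h1 hδ1'))
  refine ⟨δ, hδpos, fun s hs1 hs2 => ?_⟩
  have hs0 : 0 ≤ s := by linarith
  -- nu t = nu s + μ (stdArc s (t - s))
  have hsplit := mu_split μ (l := s) (m := t - s) 0 hs0 (by linarith) (by linarith)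
  rw [show s + (t - s) = t by ring, zero_add] at hsplit
  -- μ (stdArc (t-δ) δ) = μ (stdArc (t-δ) (s-t+δ)) + μ (stdArc s (t-s))
  have hsplit2 := mu_split μ (l := s - t + δ) (m := t - s) (t - δ) (by linarith) (by linarith)
    (by linarith)
  rw [show s - t + δ + (t - s) = δ by ring, show t - δ + (s - t + δ) = s by ring] at hsplit2
  have hub : μ.m (stdArc s (t - s)) ≤ ε / 2 := harc_le s (t - s) (by linarith) (by linarith)
  have hlb : -ε ≤ μ.m (stdArc s (t - s)) := by
    have h1 : μ.m (stdArc (t - δ) (s - t + δ)) ≤ ε / 2 :=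
      harc_le (t - δ) (s - t + δ) (by linarith) (by linarith)
    have h2 : -(ε/2) ≤ μ.m (stdArc (t - δ) δ) := by
      have := abs_le.mp hIn
      linarith [this.1]
    linarith
  have hgoal : nu μ s - nu μ t = -(μ.m (stdArc s (t - s))) := by
    unfold nu; linarith
  rw [abs_le, hgoal]
  constructor <;> linarith

end Stmt7

namespace Stmt7

variable {Λ : ℝ → ℝ} {C : ℝ} (μ : Premeasure)

lemma nu_measurable (hΛ : Majorant Λ) (hC : 0 ≤ C) (hμ : LambdaBounded Λ μ C) :
    Measurable (nu μ) := by
  have hmeas : ∀ n : ℕ, Measurable (fun t : ℝ => nu μ ((⌊(n + 1 : ℝ) * t⌋ : ℝ) / (n + 1))) := by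
    intro n
    have h1 : Measurable (fun t : ℝ => ⌊(n + 1 : ℝ) * t⌋) :=
      Int.measurable_floor.comp (measurable_const.mul measurable_id)
    exact (measurable_of_countable (fun k : ℤ => nu μ ((k : ℝ) / (n + 1)))).comp h1
  apply measurable_of_tendsto_metrizable hmeas
  rw [tendsto_pi_nhds]
  intro t
  rw [Metric.tendsto_atTop]
  intro ε hε
  obtain ⟨δ, hδ, hcont⟩ := nu_left_cont μ hΛ hC hμ t (half_pos hε)
  obtain ⟨N, hN⟩ := exists_nat_gt (1 / δ)
  refine ⟨N, fun n hn => ?_⟩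
  have hn1 : (0 : ℝ) < n + 1 := by positivity
  have hflo : (n + 1 : ℝ) * t - 1 < (⌊(n + 1 : ℝ) * t⌋ : ℝ) := Int.sub_one_lt_floor _
  have hfhi : ((⌊(n + 1 : ℝ) * t⌋ : ℝ)) ≤ (n + 1 : ℝ) * t := Int.floor_le _
  set s := (⌊(n + 1 : ℝ) * t⌋ : ℝ) / (n + 1) with hsdef
  have hs2 : s ≤ t := by
    rw [hsdef, div_le_iff₀ hn1]
    linarith
  have hs1 : t - δ ≤ s := by
    have hNn : (1:ℝ) / δ < n + 1 := by
      calc (1:ℝ)/δ < N := hN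
      _ ≤ n := by exact_mod_cast hn
      _ ≤ n + 1 := by linarith
    have hinv : 1 / (n + 1 : ℝ) < δ := by
      rw [div_lt_iff₀ hn1]
      rw [div_lt_iff₀ hδ] at hNn
      linarith
    have hd1 : 1 < δ * (↑n + 1) := by
      rw [div_lt_iff₀ hn1] at hinv
      linarith
    rw [hsdef, le_div_iff₀ hn1]
    nlinarith [hd1, hflo]
  have := hcont s hs1 hs2
  rw [Real.dist_eq]
  calc |nu μ s - nu μ t| ≤ ε / 2 := this
  _ < ε := by linarith

lemma NN_measurable (hΛ : Majorant Λ) (hC : 0 ≤ C) (hμ : LambdaBounded Λ μ C) :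
    Measurable (NN μ) :=
  (nu_measurable μ hΛ hC hμ).comp measurable_fract

lemma NN_bound (hΛ : Majorant Λ) (hC : 0 ≤ C) (hμ : LambdaBounded Λ μ C) (t : ℝ) :
    |NN μ t| ≤ C * Λ 1 := by
  have hΛ1 : 0 < Λ 1 := hΛ.1 1 ⟨one_pos, le_rfl⟩
  set s := Int.fract t with hsdef
  have hs0 : 0 ≤ s := Int.fract_nonneg t
  have hs1 : s < 1 := Int.fract_lt_one t
  have hNN : NN μ t = μ.m (stdArc 0 s) := rfl
  have hmono := hΛ.2.2.1
  have hg : ∀ u : ℝ, 0 ≤ u → u ≤ 1 → u * Λ u ≤ Λ 1 := by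
    intro u h0 h1
    rcases eq_or_lt_of_le h0 with rfl | h0'
    · simp [le_of_lt hΛ1]
    · have := hmono (Set.mem_Ioc.2 ⟨h0', h1⟩) (Set.mem_Ioc.2 ⟨one_pos, le_rfl⟩) h1
      simpa using this
  have hub : μ.m (stdArc 0 s) ≤ C * Λ 1 := by
    calc μ.m (stdArc 0 s) ≤ C * (s * Λ s) := mu_arc_le μ hμ 0 hs0 (le_of_lt hs1)
    _ ≤ C * Λ 1 := mul_le_mul_of_nonneg_left (hg s hs0 (le_of_lt hs1)) hC
  have hlb : -(C * Λ 1) ≤ μ.m (stdArc 0 s) := by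
    have hsplit := mu_split μ (l := s) (m := 1 - s) 0 hs0 (by linarith) (by linarith)
    rw [show s + (1 - s) = (1:ℝ) by ring, zero_add, mu_one] at hsplit
    have h2 : μ.m (stdArc s (1 - s)) ≤ C * Λ 1 := by
      calc μ.m (stdArc s (1 - s)) ≤ C * ((1 - s) * Λ (1 - s)) :=
            mu_arc_le μ hμ s (by linarith) (by linarith)
      _ ≤ C * Λ 1 := mul_le_mul_of_nonneg_left (hg (1 - s) (by linarith) (by linarith)) hC
    linarith
  rw [hNN, abs_le]
  exact ⟨hlb, hub⟩

end Stmt7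

namespace Stmt7

open Real

/-- kernel denominator -/
def Dr (z : ℂ) (s : ℝ) : ℝ := 1 - 2 * ‖z‖ * Real.cos s + ‖z‖ ^ 2

/-- Poisson kernel -/
def P (z : ℂ) (t : ℝ) : ℝ :=
  (1 - ‖z‖ ^ 2) / Dr z (2 * Real.pi * t - Complex.arg z)

/-- derivative of the Poisson kernel -/
def P' (z : ℂ) (t : ℝ) : ℝ :=
  -((1 - ‖z‖ ^ 2) *
    (4 * Real.pi * ‖z‖ * Real.sin (2 * Real.pi * t - Complex.arg z))) /
    (Dr z (2 * Real.pi * t - Complex.arg z)) ^ 2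

/-- base angle -/
def t0 (z : ℂ) : ℝ := Complex.arg z / (2 * Real.pi)

variable {z : ℂ} (hz : ‖z‖ < 1)

lemma Dr_ge (s : ℝ) : (1 - ‖z‖) ^ 2 ≤ Dr z s := by
  have h1 := Real.cos_le_one s
  have h2 := norm_nonneg z
  have h3 : 0 ≤ ‖z‖ * (1 - Real.cos s) := mul_nonneg h2 (by linarith)
  unfold Dr
  nlinarith

include hz in
lemma Dr_pos (s : ℝ) : 0 < Dr z s := by
  have h1 : 0 < 1 - ‖z‖ := by linarith
  have h2 : 0 < (1 - ‖z‖) ^ 2 := by positivity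
  linarith [Dr_ge (z := z) s]

lemma Dr_zero : Dr z 0 = (1 - ‖z‖) ^ 2 := by
  unfold Dr
  rw [Real.cos_zero]
  ring

lemma abs_sq_eq (t : ℝ) :
    ‖Complex.exp (2 * Real.pi * Complex.I * t) - z‖ ^ 2 =
      Dr z (2 * Real.pi * t - Complex.arg z) := by
  set θ : ℝ := 2 * Real.pi * t with hθ
  have he : (2 * (Real.pi : ℂ) * Complex.I * t) = (θ : ℂ) * Complex.I := by
    rw [hθ]; push_cast; ring
  rw [he, Complex.sq_norm, Complex.normSq_sub]
  have h1 : Complex.normSq (Complex.exp ((θ : ℂ) * Complex.I)) = 1 := by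
    rw [← Complex.sq_norm, Complex.norm_exp_ofReal_mul_I]; norm_num
  have h2 : (Complex.exp ((θ : ℂ) * Complex.I) * (starRingEnd ℂ) z).re =
      ‖z‖ * Real.cos (θ - Complex.arg z) := by
    conv_lhs => rw [← Complex.norm_mul_exp_arg_mul_I z]
    rw [map_mul]
    have h3 : (starRingEnd ℂ) ((‖z‖ : ℂ)) = (‖z‖ : ℂ) := Complex.conj_ofReal _
    have h4 : (starRingEnd ℂ) (Complex.exp ((Complex.arg z : ℂ) * Complex.I)) =
        Complex.exp (-(Complex.arg z : ℂ) * Complex.I) := by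
      rw [← Complex.exp_conj]
      congr 1
      rw [map_mul, Complex.conj_ofReal, Complex.conj_I]
      ring
    have h5 : (θ : ℂ) * Complex.I + -(Complex.arg z : ℂ) * Complex.I =
        ((θ - Complex.arg z : ℝ) : ℂ) * Complex.I := by push_cast; ring
    rw [h3, h4,
      show Complex.exp ((θ : ℂ) * Complex.I) *
          ((‖z‖ : ℂ) * Complex.exp (-(Complex.arg z : ℂ) * Complex.I)) =
        (‖z‖ : ℂ) * (Complex.exp ((θ : ℂ) * Complex.I) *
          Complex.exp (-(Complex.arg z : ℂ) * Complex.I)) from by ring,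
      ← Complex.exp_add, h5, Complex.re_ofReal_mul, Complex.exp_ofReal_mul_I_re]
  rw [h1, h2, ← Complex.sq_norm z]
  unfold Dr
  ring

lemma fun_eq_P :
    (fun s : ℝ => (1 - ‖z‖ ^ 2) /
      ‖Complex.exp (2 * Real.pi * Complex.I * s) - z‖ ^ 2) = P z := by
  funext t
  rw [abs_sq_eq]
  rfl

include hz in
lemma hasDerivAt_P (t : ℝ) : HasDerivAt (P z) (P' z t) t := by
  set r : ℝ := ‖z‖ with hr
  set φ : ℝ := Complex.arg z with hφ
  have hu : HasDerivAt (fun t : ℝ => 2 * Real.pi * t - φ) (2 * Real.pi) t := by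
    simpa using ((hasDerivAt_id t).const_mul (2 * Real.pi)).sub_const φ
  have hc : HasDerivAt (fun t : ℝ => Real.cos (2 * Real.pi * t - φ))
      (-Real.sin (2 * Real.pi * t - φ) * (2 * Real.pi)) t :=
    (Real.hasDerivAt_cos _).comp t hu
  have hD : HasDerivAt (fun t : ℝ => Dr z (2 * Real.pi * t - φ))
      (-(2 * r * (-Real.sin (2 * Real.pi * t - φ) * (2 * Real.pi)))) t := by
    have h1 : (fun t : ℝ => Dr z (2 * Real.pi * t - φ)) =
        fun t : ℝ => 1 - 2 * r * Real.cos (2 * Real.pi * t - φ) + r ^ 2 := rfl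
    rw [h1]
    have h2 := ((hc.const_mul (2 * r)).const_sub 1).add_const (r ^ 2)
    convert h2 using 1 <;> ring
  have hP := (hasDerivAt_const t (1 - r ^ 2)).div hD (ne_of_gt (Dr_pos hz _))
  have h6 : P' z t = (0 * Dr z (2 * Real.pi * t - φ) -
      (1 - r ^ 2) * -(2 * r * (-Real.sin (2 * Real.pi * t - φ) * (2 * Real.pi)))) /
      Dr z (2 * Real.pi * t - φ) ^ 2 := by
    unfold P'
    rw [← hr, ← hφ]
    congr 1
    ring
  rw [h6]
  exact hP

include hz in
lemma deriv_eq_P' :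
    deriv (fun s : ℝ => (1 - ‖z‖ ^ 2) /
      ‖Complex.exp (2 * Real.pi * Complex.I * s) - z‖ ^ 2) = P' z := by
  rw [fun_eq_P]
  funext t
  exact (hasDerivAt_P hz t).deriv

include hz in
lemma P'_continuous : Continuous (P' z) := by
  unfold P'
  apply Continuous.div
  · continuity
  · continuity
  · intro t
    exact pow_ne_zero 2 (ne_of_gt (Dr_pos hz _))

lemma P_periodic : Function.Periodic (P z) 1 := by
  intro t
  unfold P
  congr 1
  rw [show 2 * Real.pi * (t + 1) - Complex.arg z =
    (2 * Real.pi * t - Complex.arg z) + 2 * Real.pi by ring]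
  unfold Dr
  rw [Real.cos_add_two_pi]

lemma P'_periodic : Function.Periodic (P' z) 1 := by
  intro t
  unfold P'
  rw [show 2 * Real.pi * (t + 1) - Complex.arg z =
    (2 * Real.pi * t - Complex.arg z) + 2 * Real.pi by ring]
  unfold Dr
  rw [Real.cos_add_two_pi, Real.sin_add_two_pi]

lemma two_pi_t0 : 2 * Real.pi * t0 z = Complex.arg z := by
  unfold t0
  field_simp

lemma P_shift (s : ℝ) : P z (t0 z + s) = (1 - ‖z‖ ^ 2) / Dr z (2 * Real.pi * s) := by
  unfold P
  congr 2
  rw [show 2 * Real.pi * (t0 z + s) = 2 * Real.pi * t0 z + 2 * Real.pi * s by ring, two_pi_t0]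
  ring

lemma P'_shift (s : ℝ) : P' z (t0 z + s) =
    -((1 - ‖z‖ ^ 2) * (4 * Real.pi * ‖z‖ * Real.sin (2 * Real.pi * s))) /
      Dr z (2 * Real.pi * s) ^ 2 := by
  unfold P'
  rw [show 2 * Real.pi * (t0 z + s) - Complex.arg z = 2 * Real.pi * s by
    rw [show 2 * Real.pi * (t0 z + s) = 2 * Real.pi * t0 z + 2 * Real.pi * s by ring, two_pi_t0]
    ring]

include hz in
lemma P'_shift_nonpos {s : ℝ} (h0 : 0 ≤ s) (h1 : s ≤ 1 / 2) : P' z (t0 z + s) ≤ 0 := by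
  rw [P'_shift]
  apply div_nonpos_of_nonpos_of_nonneg
  · have hsin : 0 ≤ Real.sin (2 * Real.pi * s) := by
      apply Real.sin_nonneg_of_nonneg_of_le_pi
      · positivity
      · nlinarith [Real.pi_pos]
    have hr2 : ‖z‖ ^ 2 ≤ 1 := by nlinarith [norm_nonneg z]
    have : 0 ≤ (1 - ‖z‖ ^ 2) *
        (4 * Real.pi * ‖z‖ * Real.sin (2 * Real.pi * s)) := by
      apply mul_nonneg (by linarith)
      have := Real.pi_pos
      positivity
    linarith
  · positivity

lemma P'_reflect (s : ℝ) : P' z (t0 z - s) = -P' z (t0 z + s) := by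
  rw [P'_shift, show t0 z - s = t0 z + (-s) by ring, P'_shift]
  rw [show 2 * Real.pi * (-s) = -(2 * Real.pi * s) by ring, Real.sin_neg]
  have hD : Dr z (-(2 * Real.pi * s)) = Dr z (2 * Real.pi * s) := by
    unfold Dr
    rw [Real.cos_neg]
  rw [hD]
  ring

end Stmt7

namespace Stmt7

open Real

lemma intervalIntegrable_of_bounded {f : ℝ → ℝ} (hf : Measurable f) {M : ℝ}
    (hM : ∀ t, |f t| ≤ M) (a b : ℝ) : IntervalIntegrable f volume a b := by
  apply IntervalIntegrable.mono_fun' (g := fun _ => M) intervalIntegrable_const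
    hf.aestronglyMeasurable.restrict
  filter_upwards with t
  simpa [Real.norm_eq_abs] using hM t

variable {z : ℂ} (hz : ‖z‖ < 1)

include hz in
lemma P_continuous : Continuous (P z) := by
  unfold P
  apply Continuous.div continuous_const
  · unfold Dr
    continuity
  · intro t
    exact ne_of_gt (Dr_pos hz _)

include hz in
lemma P'_bound (t : ℝ) : |P' z t| ≤ 8 * Real.pi / (1 - ‖z‖) ^ 4 := by
  have hr0 := norm_nonneg z
  have hr1 : 0 < 1 - ‖z‖ := by linarith
  have hD := Dr_ge (z := z) (2 * Real.pi * t - Complex.arg z)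
  have hDpos := Dr_pos hz (2 * Real.pi * t - Complex.arg z)
  have hπ := Real.pi_pos
  unfold P'
  rw [abs_div, abs_pow]
  have hnum : |-((1 - ‖z‖ ^ 2) *
      (4 * Real.pi * ‖z‖ * Real.sin (2 * Real.pi * t - Complex.arg z)))| ≤
      8 * Real.pi := by
    rw [abs_neg, abs_mul]
    have h1 : |1 - ‖z‖ ^ 2| ≤ 1 := by
      rw [abs_le]
      constructor <;> nlinarith
    have h2 : |4 * Real.pi * ‖z‖ * Real.sin (2 * Real.pi * t - Complex.arg z)| ≤
        4 * Real.pi := by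
      rw [abs_mul]
      have h3 : |Real.sin (2 * Real.pi * t - Complex.arg z)| ≤ 1 := Real.abs_sin_le_one _
      have h4 : |4 * Real.pi * ‖z‖| ≤ 4 * Real.pi := by
        rw [abs_mul, abs_of_pos (by positivity : (0:ℝ) < 4 * Real.pi), abs_of_nonneg hr0]
        nlinarith
      nlinarith [abs_nonneg (4 * Real.pi * ‖z‖),
        abs_nonneg (Real.sin (2 * Real.pi * t - Complex.arg z))]
    nlinarith [abs_nonneg (1 - ‖z‖ ^ 2),
      abs_nonneg (4 * Real.pi * ‖z‖ * Real.sin (2 * Real.pi * t - Complex.arg z))]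
  have hden : (1 - ‖z‖) ^ 4 ≤ |Dr z (2 * Real.pi * t - Complex.arg z)| ^ 2 := by
    rw [abs_of_pos hDpos]
    calc (1 - ‖z‖) ^ 4 = ((1 - ‖z‖) ^ 2) ^ 2 := by ring
    _ ≤ Dr z (2 * Real.pi * t - Complex.arg z) ^ 2 := by
        apply pow_le_pow_left₀ (by positivity) hD
  exact div_le_div₀ (by positivity) hnum (by positivity) hden

end Stmt7

namespace Stmt7

open Real

/-- majorant weight function -/
def mfun (Λ : ℝ → ℝ) (z : ℂ) (s : ℝ) : ℝ :=
  if s ≤ min (1 - ‖z‖) (1/2) then (1 - ‖z‖) * Λ (1 - ‖z‖)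
  else min s (1/2) * Λ (1 - ‖z‖)

variable {Λ : ℝ → ℝ} {C : ℝ} {z : ℂ}

lemma mfun_measurable : Measurable (mfun Λ z) := by
  unfold mfun
  exact Measurable.ite measurableSet_Iic measurable_const
    ((measurable_id.min measurable_const).mul measurable_const)

lemma lam_pos (hΛ : Majorant Λ) (hz : ‖z‖ < 1) : 0 < Λ (1 - ‖z‖) :=
  hΛ.1 _ ⟨by linarith, by linarith [norm_nonneg z]⟩

lemma mfun_bound (hΛ : Majorant Λ) (hz : ‖z‖ < 1) (s : ℝ) :
    |mfun Λ z s| ≤ Λ (1 - ‖z‖) := by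
  have hr0 := norm_nonneg z
  have hΛpos := lam_pos hΛ hz
  unfold mfun
  split_ifs with h
  · rw [abs_of_nonneg (by nlinarith)]
    nlinarith
  · push_neg at h
    have hmin0 : 0 ≤ min s (1/2) := by
      rcases le_or_gt s (1/2) with h2 | h2
      · rw [min_eq_left h2]
        have hδ0 : 0 ≤ min (1 - ‖z‖) (1/2) := le_min (by linarith) (by norm_num)
        linarith
      · rw [min_eq_right (le_of_lt h2)]; norm_num
    have hmin1 : min s (1/2) ≤ 1 := le_trans (min_le_right _ _) (by norm_num)
    rw [abs_of_nonneg (mul_nonneg hmin0 (le_of_lt hΛpos))]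
    nlinarith

lemma mfun_nonneg (hΛ : Majorant Λ) (hz : ‖z‖ < 1) (s : ℝ) : 0 ≤ mfun Λ z s := by
  have hr0 := norm_nonneg z
  have hΛpos := lam_pos hΛ hz
  unfold mfun
  split_ifs with h
  · nlinarith
  · push_neg at h
    apply mul_nonneg _ (le_of_lt hΛpos)
    rcases le_or_gt s (1/2) with h2 | h2
    · rw [min_eq_left h2]
      have hδ0 : 0 ≤ min (1 - ‖z‖) (1/2) := le_min (by linarith) (by norm_num)
      linarith
    · rw [min_eq_right (le_of_lt h2)]; norm_num

lemma arc_le_mfun (μ : Premeasure) (hΛ : Majorant Λ) (hC : 0 ≤ C)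
    (hμ : LambdaBounded Λ μ C) (hz : ‖z‖ < 1) (a : ℝ) {s : ℝ}
    (h0 : 0 ≤ s) (h1 : s ≤ 1/2) :
    μ.m (stdArc a s) ≤ C * mfun Λ z s := by
  have hr0 := norm_nonneg z
  have hΛpos := lam_pos hΛ hz
  have hgmono := hΛ.2.2.1
  have hanti := hΛ.2.1
  unfold mfun
  split_ifs with h
  · -- s ≤ min (1-r) (1/2)
    have hs1r : s ≤ 1 - ‖z‖ := le_trans h (min_le_left _ _)
    rcases eq_or_lt_of_le h0 with rfl | h0'
    · rw [stdArc_zero]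
      rw [μ.empty]
      positivity
    · have hle := hgmono (Set.mem_Ioc.2 ⟨h0', by linarith⟩)
        (Set.mem_Ioc.2 ⟨by linarith, by linarith⟩) hs1r
      simp only at hle
      calc μ.m (stdArc a s) ≤ C * (s * Λ s) := mu_arc_le μ hμ a h0 (by linarith)
      _ ≤ C * ((1 - ‖z‖) * Λ (1 - ‖z‖)) :=
          mul_le_mul_of_nonneg_left hle hC
  · push_neg at h
    have hrs : 1 - ‖z‖ < s := by
      rcases min_lt_iff.mp h with h2 | h2
      · linarith
      · linarith
    rw [min_eq_left h1]
    have hanti' : Λ s ≤ Λ (1 - ‖z‖) :=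
      hanti (Set.mem_Ioc.2 ⟨by linarith, by linarith⟩)
        (Set.mem_Ioc.2 ⟨by linarith, by linarith⟩) (le_of_lt hrs)
    calc μ.m (stdArc a s) ≤ C * (s * Λ s) := mu_arc_le μ hμ a h0 (by linarith)
    _ ≤ C * (s * Λ (1 - ‖z‖)) := by
        apply mul_le_mul_of_nonneg_left _ hC
        exact mul_le_mul_of_nonneg_left hanti' h0

end Stmt7

namespace Stmt7

open Real intervalIntegral

variable {Λ : ℝ → ℝ} {z : ℂ}

set_option maxHeartbeats 1600000 in
lemma key_est (hΛ : Majorant Λ) (hz : ‖z‖ < 1) :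
    ∫ u in (0:ℝ)..(1/2), (-P' z (t0 z + u)) * mfun Λ z u ≤
      5 * Λ (1 - ‖z‖) := by
  set r : ℝ := ‖z‖ with hrdef
  have hr0 : 0 ≤ r := norm_nonneg z
  have hΛpos : 0 < Λ (1 - r) := lam_pos hΛ hz
  set Lam : ℝ := Λ (1 - r) with hLdef
  -- basic continuity facts
  have hshift : Continuous (fun u : ℝ => t0 z + u) := by continuity
  have hQcont : Continuous (fun u : ℝ => P z (t0 z + u)) := (P_continuous hz).comp hshift
  have hQ'cont : Continuous (fun u : ℝ => P' z (t0 z + u)) := (P'_continuous hz).comp hshift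
  have hQder : ∀ u : ℝ, HasDerivAt (fun v => P z (t0 z + v)) (P' z (t0 z + u)) u := by
    intro u
    have h1 := (hasDerivAt_P hz (t0 z + u)).comp u ((hasDerivAt_id u).const_add (t0 z))
    simpa [Function.comp_def] using h1
  have hQnonneg : ∀ u : ℝ, 0 ≤ P z (t0 z + u) := by
    intro u
    rw [P_shift]
    apply div_nonneg (by nlinarith) (le_of_lt (Dr_pos hz _))
  have hQ0 : P z (t0 z + 0) = (1 - r ^ 2) / (1 - r) ^ 2 := by
    rw [P_shift, mul_zero, Dr_zero]
  have hQ0le : (1 - r) * P z (t0 z + 0) ≤ 2 := by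
    rw [hQ0]
    have h1 : 0 < 1 - r := by linarith
    rw [show (1 - r^2) / (1-r)^2 = (1+r)/(1-r) by field_simp; ring]
    rw [mul_comm, div_mul_cancel₀ _ (ne_of_gt h1)]
    linarith
  -- integrability of the full integrand
  have hPB := P'_bound hz
  have hIint : ∀ a b : ℝ, IntervalIntegrable
      (fun u => (-P' z (t0 z + u)) * mfun Λ z u) volume a b := by
    intro a b
    refine intervalIntegrable_of_bounded (((hQ'cont.neg).measurable).mul mfun_measurable)
      (M := (8 * Real.pi / (1 - r)^4) * Lam) (fun t => ?_) a b
    simp only [Pi.mul_apply, Pi.neg_apply]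
    rw [abs_mul, abs_neg]
    exact mul_le_mul (hPB _) (mfun_bound hΛ hz t) (abs_nonneg _) (by positivity)
  -- FTC for -P'
  have hFTC : ∀ a b : ℝ, ∫ u in a..b, -P' z (t0 z + u) =
      P z (t0 z + a) - P z (t0 z + b) := by
    intro a b
    rw [intervalIntegral.integral_neg, integral_eq_sub_of_hasDerivAt (fun u _ => hQder u)
      (hQ'cont.intervalIntegrable _ _)]
    ring
  rcases le_or_gt (1/2 : ℝ) (1 - r) with hcase | hcase
  · -- easy case : 1 - r ≥ 1/2
    have hmin : min (1 - r) (1/2 : ℝ) = 1/2 := min_eq_right hcase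
    have hEq : Set.EqOn (fun u => (-P' z (t0 z + u)) * mfun Λ z u)
        (fun u => ((1 - r) * Lam) * (-P' z (t0 z + u))) (Set.uIcc 0 (1/2)) := by
      intro u hu
      rw [Set.uIcc_of_le (by norm_num)] at hu
      simp only
      unfold mfun
      rw [if_pos (by rw [hmin]; exact hu.2)]
      ring
    rw [integral_congr hEq, intervalIntegral.integral_const_mul, hFTC]
    have h2 : P z (t0 z + 0) - P z (t0 z + 1/2) ≤ P z (t0 z + 0) := by
      linarith [hQnonneg (1/2 : ℝ)]
    calc (1 - r) * Lam * (P z (t0 z + 0) - P z (t0 z + 1/2))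
        ≤ (1 - r) * Lam * P z (t0 z + 0) := by
          apply mul_le_mul_of_nonneg_left h2 (by nlinarith)
    _ = Lam * ((1 - r) * P z (t0 z + 0)) := by ring
    _ ≤ Lam * 2 := mul_le_mul_of_nonneg_left hQ0le (le_of_lt hΛpos)
    _ ≤ 5 * Lam := by nlinarith
  · -- main case : 1 - r < 1/2
    set δ : ℝ := 1 - r with hδdef
    have hδpos : 0 < δ := by linarith
    have hδhalf : δ < 1/2 := hcase
    have hmin : min (1 - r) (1/2 : ℝ) = δ := min_eq_left (le_of_lt hcase)
    -- split the integral at δ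
    have hsplit : ∫ u in (0:ℝ)..(1/2), (-P' z (t0 z + u)) * mfun Λ z u =
        (∫ u in (0:ℝ)..δ, (-P' z (t0 z + u)) * mfun Λ z u) +
        ∫ u in δ..(1/2), (-P' z (t0 z + u)) * mfun Λ z u :=
      (integral_add_adjacent_intervals (hIint 0 δ) (hIint δ (1/2))).symm
    rw [hsplit]
    -- piece 1
    have hEq1 : Set.EqOn (fun u => (-P' z (t0 z + u)) * mfun Λ z u)
        (fun u => ((1 - r) * Lam) * (-P' z (t0 z + u))) (Set.uIcc 0 δ) := by
      intro u hu
      rw [Set.uIcc_of_le (le_of_lt hδpos)] at hu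
      simp only
      unfold mfun
      rw [if_pos (by rw [hmin]; exact hu.2)]
      ring
    have hp1 : (∫ u in (0:ℝ)..δ, (-P' z (t0 z + u)) * mfun Λ z u) ≤ 2 * Lam := by
      rw [integral_congr hEq1, intervalIntegral.integral_const_mul, hFTC]
      have h2 : P z (t0 z + 0) - P z (t0 z + δ) ≤ P z (t0 z + 0) := by
        linarith [hQnonneg δ]
      calc (1 - r) * Lam * (P z (t0 z + 0) - P z (t0 z + δ))
          ≤ (1 - r) * Lam * P z (t0 z + 0) := by
            apply mul_le_mul_of_nonneg_left h2 (by nlinarith)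
      _ = Lam * ((1 - r) * P z (t0 z + 0)) := by ring
      _ ≤ Lam * 2 := mul_le_mul_of_nonneg_left hQ0le (le_of_lt hΛpos)
      _ = 2 * Lam := by ring
    -- piece 2
    have hEq2 : Set.EqOn (fun u => (-P' z (t0 z + u)) * mfun Λ z u)
        (fun u => Lam * (u * (-P' z (t0 z + u)))) (Set.uIcc δ (1/2)) := by
      intro u hu
      rw [Set.uIcc_of_le (le_of_lt hδhalf)] at hu
      simp only
      unfold mfun
      rcases eq_or_lt_of_le hu.1 with rfl | hlt
      · rw [if_pos (by rw [hmin])]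
        ring
      · rw [if_neg (by rw [hmin]; linarith), min_eq_left hu.2]
        ring
    have hp2 : (∫ u in δ..(1/2), (-P' z (t0 z + u)) * mfun Λ z u) ≤
        Lam * (2 + 1/4) := by
      rw [integral_congr hEq2, intervalIntegral.integral_const_mul]
      apply mul_le_mul_of_nonneg_left _ (le_of_lt hΛpos)
      -- ∫ u * (-P') ≤ δ Q δ + ∫ Q ≤ 2 + 1/4
      have hibp : ∀ u : ℝ, HasDerivAt (fun v => -(v * P z (t0 z + v)))
          (-(P z (t0 z + u) + u * P' z (t0 z + u))) u := by
        intro u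
        have h1 : HasDerivAt (fun v => -(v * P z (t0 z + v))) _ u :=
          ((hasDerivAt_id u).mul (hQder u)).neg
        convert h1 using 1
        simp only [id_eq]
        ring
      have heq3 : Set.EqOn (fun u => u * (-P' z (t0 z + u)))
          (fun u => (-(P z (t0 z + u) + u * P' z (t0 z + u))) + P z (t0 z + u))
          (Set.uIcc δ (1/2)) := by
        intro u _
        simp only
        ring
      rw [integral_congr heq3, integral_add
        ((show Continuous (fun u => -(P z (t0 z + u) + u * P' z (t0 z + u))) from
          (hQcont.add (continuous_id'.mul hQ'cont)).neg).intervalIntegrable _ _)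
        (hQcont.intervalIntegrable _ _)]
      have hibpval : (∫ u in δ..(1/2),
          -(P z (t0 z + u) + u * P' z (t0 z + u))) =
          -(1/2 * P z (t0 z + 1/2)) - (-(δ * P z (t0 z + δ))) := by
        rw [integral_eq_sub_of_hasDerivAt (fun u _ => hibp u)
          (((hQcont.add (continuous_id'.mul hQ'cont)).neg).intervalIntegrable _ _)]
      rw [hibpval]
      have hδQδ : δ * P z (t0 z + δ) ≤ 2 := by
        rw [P_shift]
        have hD := Dr_ge (z := z) (2 * Real.pi * δ)
        have hDpos := Dr_pos hz (2 * Real.pi * δ)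
        have h1 : (1 - r^2) / Dr z (2 * Real.pi * δ) ≤ (1 - r^2) / (1-r)^2 := by
          apply div_le_div_of_nonneg_left (by nlinarith) (by positivity) hD
        calc δ * ((1 - r^2) / Dr z (2 * Real.pi * δ)) ≤ δ * ((1 - r^2)/(1-r)^2) := by
              apply mul_le_mul_of_nonneg_left h1 (le_of_lt hδpos)
        _ = 1 + r := by
            rw [hδdef]
            have hne : (1:ℝ) - r ≠ 0 := by linarith
            field_simp
            ring
        _ ≤ 2 := by linarith
      have hQint : (∫ u in δ..(1/2), P z (t0 z + u)) ≤ 1/4 := by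
        have hptw : ∀ u ∈ Set.Icc δ (1/2 : ℝ), P z (t0 z + u) ≤
            (1 - r)/4 * (u^2)⁻¹ := by
          intro u hu
          have hu0 : 0 < u := lt_of_lt_of_le hδpos hu.1
          have hrhalf : 1/2 < r := by
            have h := hδhalf
            rw [hδdef] at h
            linarith
          have hπ := Real.pi_pos
          have hsin : 2 * u ≤ Real.sin (Real.pi * u) := by
            have h5 := Real.mul_le_sin (x := Real.pi * u) (by positivity)
              (by nlinarith [hu.2])
            calc 2 * u = 2 / Real.pi * (Real.pi * u) := by field_simp
            _ ≤ _ := h5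
          have hsin0 : 0 ≤ Real.sin (Real.pi * u) := by linarith
          have hs2 : (2*u)^2 ≤ Real.sin (Real.pi * u)^2 :=
            pow_le_pow_left₀ (by linarith) hsin 2
          have hc : Real.cos (2 * Real.pi * u) = 1 - 2 * Real.sin (Real.pi * u)^2 := by
            rw [show 2 * Real.pi * u = 2 * (Real.pi * u) by ring, Real.cos_two_mul]
            nlinarith [Real.sin_sq_add_cos_sq (Real.pi * u)]
          have hDr : 8 * u^2 ≤ Dr z (2 * Real.pi * u) := by
            unfold Dr
            rw [hc, ← hrdef]
            nlinarith [sq_nonneg (1 - r)]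
          have hDpos : (0:ℝ) < 8 * u^2 := by positivity
          rw [P_shift]
          calc (1 - r^2) / Dr z (2 * Real.pi * u) ≤ (1 - r^2) / (8 * u^2) := by
                apply div_le_div_of_nonneg_left (by nlinarith) (by positivity) hDr
          _ ≤ (1 - r)/4 * (u^2)⁻¹ := by
              rw [show (1 - r)/4 * (u^2)⁻¹ = (2 * (1 - r)) / (8 * u^2) by
                field_simp; ring]
              exact (div_le_div_iff_of_pos_right hDpos).mpr (by nlinarith)
        have hRint : IntervalIntegrable (fun u : ℝ => (1 - r)/4 * (u^2)⁻¹)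
            volume δ (1/2) := by
          apply ContinuousOn.intervalIntegrable
          apply ContinuousOn.mul continuousOn_const
          apply ContinuousOn.inv₀ ((continuous_pow 2).continuousOn)
          intro u hu
          rw [Set.uIcc_of_le (le_of_lt hδhalf)] at hu
          have hu0 : 0 < u := lt_of_lt_of_le hδpos hu.1
          positivity
        have hRval : (∫ u in δ..(1/2), (1 - r)/4 * (u^2)⁻¹) =
            (1-r)/4 * δ⁻¹ - (1-r)/2 := by
          have hder : ∀ u ∈ Set.uIcc δ (1/2:ℝ),
              HasDerivAt (fun v : ℝ => -((1 - r)/4 * v⁻¹)) ((1 - r)/4 * (u^2)⁻¹) u := by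
            intro u hu
            rw [Set.uIcc_of_le (le_of_lt hδhalf)] at hu
            have hu0 : u ≠ 0 := ne_of_gt (lt_of_lt_of_le hδpos hu.1)
            have h1 : HasDerivAt (fun v : ℝ => -((1 - r)/4 * v⁻¹)) _ u :=
              ((hasDerivAt_inv hu0).const_mul ((1 - r)/4)).neg
            convert h1 using 1
            ring
          rw [integral_eq_sub_of_hasDerivAt hder hRint]
          have h12 : ((1:ℝ)/2)⁻¹ = 2 := by norm_num
          rw [h12]
          ring
        have hmono := integral_mono_on (μ := volume) (le_of_lt hδhalf)
          (hQcont.intervalIntegrable _ _) hRint hptw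
        have hfin : (1-r)/4 * δ⁻¹ - (1-r)/2 ≤ 1/4 := by
          have h1r : (0:ℝ) < 1 - r := by rw [← hδdef]; exact hδpos
          rw [hδdef]
          rw [show (1-r)/4 * (1-r)⁻¹ = 1/4 by
            field_simp]
          linarith
        linarith
      have hQhalf := hQnonneg ((1:ℝ)/2)
      clear_value δ
      linarith [hδQδ, hQint, hQhalf]
    linarith [hp1, hp2]

end Stmt7

open Stmt7 in
set_option maxHeartbeats 1600000 in
theorem stmt7' (Λ : ℝ → ℝ) (hΛ : Majorant Λ) (μ : Premeasure) (C : ℝ)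
    (hC : 0 ≤ C) (hμ : LambdaBounded Λ μ C)
    (z : ℂ) (hz : ‖z‖ < 1) :
    -(∫ t in Set.Ioc (0:ℝ) 1,
        deriv (fun s : ℝ => (1 - ‖z‖ ^ 2) /
          ‖Complex.exp (2 * Real.pi * Complex.I * s) - z‖ ^ 2) t *
          μ.m (stdArc 0 t))
      ≤ 10 * C * Λ (1 - ‖z‖) := by
  have hΛ1 : 0 < Λ 1 := hΛ.1 1 ⟨one_pos, le_rfl⟩
  have hΛr : 0 < Λ (1 - ‖z‖) := lam_pos hΛ hz
  have h1r : 0 < 1 - ‖z‖ := by linarith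
  set a : ℝ := t0 z - 1/2 with hadef
  set b : ℝ := t0 z + 1/2 with hbdef
  set c : ℝ := NN μ (t0 z) with hcdef
  -- step 1 : rewrite the integrand
  have hrw : Set.EqOn
      (fun t => deriv (fun s : ℝ => (1 - ‖z‖ ^ 2) /
          ‖Complex.exp (2 * Real.pi * Complex.I * s) - z‖ ^ 2) t *
          μ.m (stdArc 0 t))
      (fun t => P' z t * NN μ t) (Set.Ioc 0 1) := by
    intro t ht
    simp only
    rw [deriv_eq_P' hz]
    congr 1
    rw [NN_eq μ (le_of_lt ht.1) ht.2]
    rfl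
  rw [MeasureTheory.setIntegral_congr_fun measurableSet_Ioc hrw,
    ← intervalIntegral.integral_of_le zero_le_one]
  -- step 2 : shift by periodicity
  have hper : Function.Periodic (fun t => P' z t * NN μ t) 1 := by
    intro t
    simp only
    rw [P'_periodic (z := z) t, NN_periodic μ t]
  have hshift := hper.intervalIntegral_add_eq 0 a
  rw [zero_add, show a + 1 = b by rw [hadef, hbdef]; ring] at hshift
  rw [hshift]
  -- integrability
  have hfint : ∀ u v : ℝ, IntervalIntegrable (fun t => P' z t * NN μ t) volume u v := by
    intro u v
    refine intervalIntegrable_of_bounded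
      (((P'_continuous hz).measurable).mul (NN_measurable μ hΛ hC hμ))
      (M := (8 * Real.pi / (1 - ‖z‖)^4) * (C * Λ 1)) (fun t => ?_) u v
    simp only [Pi.mul_apply]
    rw [abs_mul]
    refine mul_le_mul (P'_bound hz t) (NN_bound μ hΛ hC hμ t) (abs_nonneg _) ?_
    positivity
  -- ∫ P' = 0 over a period
  have hzero : (∫ t in a..b, P' z t) = 0 := by
    rw [intervalIntegral.integral_eq_sub_of_hasDerivAt (fun t _ => hasDerivAt_P hz t)
      ((P'_continuous hz).intervalIntegrable _ _)]
    have h1 : P z b = P z a := by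
      rw [hbdef, hadef, P_shift, show t0 z - 1/2 = t0 z + (-(1/2)) by ring, P_shift]
      congr 1
      unfold Dr
      rw [show 2*Real.pi*(-(1/2)) = -(2*Real.pi*(1/2)) by ring, Real.cos_neg]
    rw [h1, sub_self]
  -- replace by integral against (c - NN)
  have hrewr : (∫ t in a..b, (c * P' z t - P' z t * NN μ t)) =
      -(∫ t in a..b, P' z t * NN μ t) := by
    rw [intervalIntegral.integral_sub (((P'_continuous hz).intervalIntegrable _ _).const_mul c)
      (hfint _ _), intervalIntegral.integral_const_mul, hzero, mul_zero, zero_sub]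
  rw [← hrewr]
  -- split at t0
  have hgint : ∀ u v : ℝ, IntervalIntegrable
      (fun t => c * P' z t - P' z t * NN μ t) volume u v := fun u v =>
    ((continuous_const.mul (P'_continuous hz)).intervalIntegrable _ _).sub (hfint u v)
  have hsplit2 : (∫ t in a..b, (c * P' z t - P' z t * NN μ t)) =
      (∫ t in a..(t0 z), (c * P' z t - P' z t * NN μ t)) +
      ∫ t in (t0 z)..b, (c * P' z t - P' z t * NN μ t) :=
    (intervalIntegral.integral_add_adjacent_intervals (hgint a (t0 z)) (hgint (t0 z) b)).symm
  rw [hsplit2]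
  -- the common majorant integral
  set E : ℝ := ∫ u in (0:ℝ)..(1/2), (-P' z (t0 z + u)) * mfun Λ z u with hEdef
  have hEkey : E ≤ 5 * Λ (1 - ‖z‖) := key_est hΛ hz
  -- integrability of majorant integrands
  have hmaj_meas : Measurable (fun t : ℝ => mfun Λ z (t - t0 z)) :=
    mfun_measurable.comp (measurable_id.sub_const _)
  have hmaj_meas' : Measurable (fun t : ℝ => mfun Λ z (t0 z - t)) :=
    mfun_measurable.comp (measurable_const.sub measurable_id)
  have hmajR_int : IntervalIntegrable
      (fun t => C * ((-P' z t) * mfun Λ z (t - t0 z))) volume (t0 z) b := by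
    refine intervalIntegrable_of_bounded
      ((((P'_continuous hz).neg.measurable).mul hmaj_meas).const_mul C)
      (M := C * ((8 * Real.pi / (1 - ‖z‖)^4) * Λ (1 - ‖z‖)))
      (fun t => ?_) _ _
    simp only [Pi.mul_apply, Pi.neg_apply]
    rw [abs_mul, abs_mul, abs_neg, abs_of_nonneg hC]
    refine mul_le_mul_of_nonneg_left ?_ hC
    exact mul_le_mul (P'_bound hz t) (mfun_bound hΛ hz _) (abs_nonneg _) (by positivity)
  have hmajL_int : IntervalIntegrable
      (fun t => C * (P' z t * mfun Λ z (t0 z - t))) volume a (t0 z) := by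
    refine intervalIntegrable_of_bounded
      ((((P'_continuous hz).measurable).mul hmaj_meas').const_mul C)
      (M := C * ((8 * Real.pi / (1 - ‖z‖)^4) * Λ (1 - ‖z‖)))
      (fun t => ?_) _ _
    simp only [Pi.mul_apply]
    rw [abs_mul, abs_mul, abs_of_nonneg hC]
    refine mul_le_mul_of_nonneg_left ?_ hC
    exact mul_le_mul (P'_bound hz t) (mfun_bound hΛ hz _) (abs_nonneg _) (by positivity)
  -- right piece
  have hR : (∫ t in (t0 z)..b, (c * P' z t - P' z t * NN μ t)) ≤
      ∫ t in (t0 z)..b, C * ((-P' z t) * mfun Λ z (t - t0 z)) := by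
    apply intervalIntegral.integral_mono_on (by rw [hbdef]; linarith) (hgint _ _) hmajR_int
    intro t ht
    rw [hbdef] at ht
    have hs0 : 0 ≤ t - t0 z := by linarith [ht.1]
    have hs12 : t - t0 z ≤ 1/2 := by linarith [ht.2]
    have hN : μ.m (stdArc (t0 z) (t - t0 z)) = NN μ t - c := by
      rw [mu_arc_eq μ (t0 z) hs0 (by linarith), show t0 z + (t - t0 z) = t by ring, hcdef]
    have harc : μ.m (stdArc (t0 z) (t - t0 z)) ≤ C * mfun Λ z (t - t0 z) :=
      arc_le_mfun μ hΛ hC hμ hz (t0 z) hs0 hs12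
    have hP'neg : P' z t ≤ 0 := by
      have := P'_shift_nonpos hz hs0 hs12
      rwa [show t0 z + (t - t0 z) = t by ring] at this
    calc c * P' z t - P' z t * NN μ t = (-P' z t) * (NN μ t - c) := by ring
    _ ≤ (-P' z t) * (C * mfun Λ z (t - t0 z)) := by
        apply mul_le_mul_of_nonneg_left _ (by linarith)
        rw [← hN]
        exact harc
    _ = C * ((-P' z t) * mfun Λ z (t - t0 z)) := by ring
  have hRval : (∫ t in (t0 z)..b, C * ((-P' z t) * mfun Λ z (t - t0 z))) = C * E := by
    rw [intervalIntegral.integral_const_mul]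
    congr 1
    have hcv := intervalIntegral.integral_comp_add_left (a := 0) (b := 1/2)
      (fun x => (-P' z x) * mfun Λ z (x - t0 z)) (t0 z)
    simp only [add_sub_cancel_left, add_zero] at hcv
    rw [hbdef, hEdef, ← hcv]
  -- left piece
  have hL : (∫ t in a..(t0 z), (c * P' z t - P' z t * NN μ t)) ≤
      ∫ t in a..(t0 z), C * (P' z t * mfun Λ z (t0 z - t)) := by
    apply intervalIntegral.integral_mono_on (by rw [hadef]; linarith) (hgint _ _) hmajL_int
    intro t ht
    rw [hadef] at ht
    have hs0 : 0 ≤ t0 z - t := by linarith [ht.2]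
    have hs12 : t0 z - t ≤ 1/2 := by linarith [ht.1]
    have hN : μ.m (stdArc t (t0 z - t)) = c - NN μ t := by
      rw [mu_arc_eq μ t hs0 (by linarith), show t + (t0 z - t) = t0 z by ring, hcdef]
    have harc : μ.m (stdArc t (t0 z - t)) ≤ C * mfun Λ z (t0 z - t) :=
      arc_le_mfun μ hΛ hC hμ hz t hs0 hs12
    have hP'pos : 0 ≤ P' z t := by
      have h1 := P'_shift_nonpos hz hs0 hs12
      have h2 := P'_reflect (z := z) (t0 z - t)
      rw [show t0 z - (t0 z - t) = t by ring] at h2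
      linarith
    calc c * P' z t - P' z t * NN μ t = P' z t * (c - NN μ t) := by ring
    _ ≤ P' z t * (C * mfun Λ z (t0 z - t)) := by
        apply mul_le_mul_of_nonneg_left _ hP'pos
        rw [← hN]
        exact harc
    _ = C * (P' z t * mfun Λ z (t0 z - t)) := by ring
  have hLval : (∫ t in a..(t0 z), C * (P' z t * mfun Λ z (t0 z - t))) = C * E := by
    rw [intervalIntegral.integral_const_mul]
    congr 1
    have hcv := intervalIntegral.integral_comp_sub_left (a := 0) (b := 1/2)
      (fun x => P' z x * mfun Λ z (t0 z - x)) (t0 z)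
    simp only [sub_sub_cancel, sub_zero] at hcv
    rw [hadef, hEdef, ← hcv]
    apply intervalIntegral.integral_congr
    intro u hu
    simp only
    rw [P'_reflect]
  have hCE : C * E ≤ 5 * C * Λ (1 - ‖z‖) := by
    calc C * E ≤ C * (5 * Λ (1 - ‖z‖)) := mul_le_mul_of_nonneg_left hEkey hC
    _ = 5 * C * Λ (1 - ‖z‖) := by ring
  have hRfin := le_trans hR (le_of_eq hRval)
  have hLfin := le_trans hL (le_of_eq hLval)
  linarith

/-- The Poisson integral of a `Λ`-bounded premeasure, defined by integration by
parts against the distribution function `t ↦ μ(stdArc 0 t)`, satisfies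
`P[μ](z) ≤ 10 ‖μ‖⁺_Λ Λ(1−|z|)` on the unit disk. -/
theorem stmt7 (Λ : ℝ → ℝ) (hΛ : Majorant Λ) (μ : Premeasure) (C : ℝ)
    (hC : 0 ≤ C) (hμ : LambdaBounded Λ μ C)
    (z : ℂ) (hz : ‖z‖ < 1) :
    -(∫ t in Set.Ioc (0:ℝ) 1,
        deriv (fun s : ℝ => (1 - ‖z‖ ^ 2) /
          ‖Complex.exp (2 * Real.pi * Complex.I * s) - z‖ ^ 2) t *
          μ.m (stdArc 0 t))
      ≤ 10 * C * Λ (1 - ‖z‖) :=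
  stmt7' Λ hΛ μ C hC hμ z hz
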